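/- Under the identification Φ, the localized doubling map y_{10} corresponds to the projective map c(t) = 2t/(1+t) on [0,1] extended by the identity: for every infinite binary sequence ξ, c(Φ(ξ)) = Φ(y_{10}(ξ)), where c(t) = 2t/(1+t) for 0 ≤ t ≤ 1 and c(t) = t otherwise. -/

import Mathlib

open scoped ENNReal NNReal
open ENNReal

abbrev Mt := ℕ × ℕ × ℕ × ℕ

noncomputable def mob : Mt → ℝ≥0∞ → ℝ≥0∞
  | (a,b,c,d), x => if x = ⊤ then (a : ℝ≥0∞) / c else ((a : ℝ≥0∞) * x + b) / ((c : ℝ≥0∞) * x + d)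

def Good : Mt → Prop
  | (a,b,c,d) => 1 ≤ a ∧ 1 ≤ d ∧ b * c < a * d

def mmul : Mt → Mt → Mt
  | (a,b,c,d), (a',b',c',d') => (a*a'+b*c', a*b'+b*d', c*a'+d*c', c*b'+d*d')

lemma Good.mul {P Q : Mt} (hP : Good P) (hQ : Good Q) : Good (mmul P Q) := by
  obtain ⟨a,b,c,d⟩ := P; obtain ⟨a',b',c',d'⟩ := Q
  obtain ⟨h1, h2, h3⟩ := hP; obtain ⟨h1', h2', h3'⟩ := hQ
  refine ⟨by nlinarith, by nlinarith, by nlinarith⟩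

lemma mob_coe {P : Mt} (hP : Good P) (r : ℝ≥0) :
    mob P (r : ℝ≥0∞) = (((P.1 * r + P.2.1) / (P.2.2.1 * r + P.2.2.2) : ℝ≥0) : ℝ≥0∞) := by
  obtain ⟨a,b,c,d⟩ := P
  obtain ⟨h1, h2, h3⟩ := hP
  have hd : ((c : ℝ≥0) * r + d) ≠ 0 := by
    intro h
    have : (d : ℝ≥0) = 0 := (add_eq_zero.mp h).2
    simp at this; omega
  simp only [mob, coe_ne_top, if_false]
  rw [ENNReal.coe_div hd]
  push_cast
  ring_nf

lemma mob_top (P : Mt) : mob P ⊤ = (P.1 : ℝ≥0∞) / P.2.2.1 := by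
  obtain ⟨a,b,c,d⟩ := P; simp [mob]

private lemma auxA (a b c d a' b' c' d' x : ℝ≥0) (hd : d ≠ 0) (hd' : d' ≠ 0) :
    (a*((a'*x+b')/(c'*x+d')) + b)/(c*((a'*x+b')/(c'*x+d'))+d)
      = ((a*a'+b*c')*x + (a*b'+b*d'))/((c*a'+d*c')*x+(c*b'+d*d')) := by
  have h1 : c'*x+d' ≠ 0 := by intro h; exact hd' (add_eq_zero.mp h).2
  have h2 : c*((a'*x+b')/(c'*x+d'))+d ≠ 0 := by intro h; exact hd (add_eq_zero.mp h).2
  have h3 : (c*a'+d*c')*x+(c*b'+d*d') ≠ 0 := by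
    intro h
    rcases mul_eq_zero.mp (add_eq_zero.mp (add_eq_zero.mp h).2).2 with h5 | h5
    · exact hd h5
    · exact hd' h5
  field_simp
  ring

private lemma auxB (a b c d a' c' : ℝ≥0) (hd : d ≠ 0) (hc' : c' ≠ 0) :
    (a*(a'/c')+b)/(c*(a'/c')+d) = (a*a'+b*c')/(c*a'+d*c') := by
  have h2 : c*(a'/c')+d ≠ 0 := by intro h; exact hd (add_eq_zero.mp h).2
  have h3 : c*a'+d*c' ≠ 0 := by
    intro h
    rcases mul_eq_zero.mp (add_eq_zero.mp h).2 with h5 | h5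
    · exact hd h5
    · exact hc' h5
  field_simp

lemma nat_div_coe {m n : ℕ} (hn : n ≠ 0) :
    (m : ℝ≥0∞) / (n : ℝ≥0∞) = ENNReal.ofNNReal ((m : ℝ≥0) / (n : ℝ≥0)) := by
  rw [ENNReal.coe_div (Nat.cast_ne_zero.mpr hn)]
  norm_cast

lemma mob_comp {P Q : Mt} (hP : Good P) (hQ : Good Q) (x : ℝ≥0∞) :
    mob P (mob Q x) = mob (mmul P Q) x := by
  obtain ⟨a,b,c,d⟩ := P; obtain ⟨a',b',c',d'⟩ := Q
  obtain ⟨h1, h2, h3⟩ := hP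
  obtain ⟨h1', h2', h3'⟩ := hQ
  rcases eq_or_ne x ⊤ with rfl | hx
  · rw [mob_top, mob_top]
    show mob _ ((a' : ℝ≥0∞)/(c' : ℕ)) = ((a*a'+b*c' : ℕ) : ℝ≥0∞) / ((c*a'+d*c' : ℕ) : ℝ≥0∞)
    rcases Nat.eq_zero_or_pos c' with rfl | hc'
    · have ha' : ((a' : ℝ≥0∞)) ≠ 0 := by exact_mod_cast Nat.one_le_iff_ne_zero.mp h1'
      rw [show ((0:ℕ):ℝ≥0∞) = 0 by norm_cast, ENNReal.div_zero ha', mob_top]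
      show (a:ℝ≥0∞)/c = _
      rw [show a*a'+b*0 = a*a' by ring, show c*a'+d*0 = c*a' by ring]
      push_cast
      rw [ENNReal.mul_div_mul_right _ _ ha' (by simp)]
    · have hc'0 : c' ≠ 0 := by omega
      rw [nat_div_coe hc'0, mob_coe (P := (a,b,c,d)) ⟨h1,h2,h3⟩, nat_div_coe (show c*a'+d*c' ≠ 0 by
        intro h; rcases Nat.add_eq_zero.mp h with ⟨_, h5⟩
        rcases Nat.mul_eq_zero.mp h5 with h6|h6 <;> omega)]
      rw [ENNReal.coe_inj]
      simp only [mmul]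
      push_cast
      exact auxB (a:ℝ≥0) b c d a' c' (Nat.cast_ne_zero.mpr (show d ≠ 0 by omega))
        (Nat.cast_ne_zero.mpr (show c' ≠ 0 by omega))
  · lift x to ℝ≥0 using hx
    rw [mob_coe ⟨h1',h2',h3'⟩, mob_coe ⟨h1,h2,h3⟩,
      mob_coe (Good.mul ⟨h1,h2,h3⟩ ⟨h1',h2',h3'⟩)]
    rw [ENNReal.coe_inj]
    simp only [mmul]
    push_cast
    exact auxA (a:ℝ≥0) b c d a' b' c' d' x (Nat.cast_ne_zero.mpr (show d ≠ 0 by omega))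
      (Nat.cast_ne_zero.mpr (show d' ≠ 0 by omega))

lemma mob_lower {P : Mt} (hP : Good P) (x : ℝ≥0∞) :
    (P.2.1 : ℝ≥0∞) / P.2.2.2 ≤ mob P x := by
  obtain ⟨a,b,c,d⟩ := P
  obtain ⟨h1, h2, h3⟩ := hP
  have hd0 : d ≠ 0 := by omega
  have hdR : (0:ℝ) < d := by exact_mod_cast Nat.pos_of_ne_zero hd0
  have h3R : (b:ℝ) * c ≤ a * d := by exact_mod_cast h3.le
  rcases eq_or_ne x ⊤ with rfl | hx
  · rw [mob_top]
    show (b:ℝ≥0∞)/d ≤ (a:ℝ≥0∞)/c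
    rcases Nat.eq_zero_or_pos c with rfl | hc
    · simp [ENNReal.div_zero (show (a:ℝ≥0∞) ≠ 0 by exact_mod_cast Nat.one_le_iff_ne_zero.mp h1)]
    · have hcR : (0:ℝ) < c := by exact_mod_cast hc
      rw [nat_div_coe hd0, nat_div_coe (show c ≠ 0 by omega), ENNReal.coe_le_coe,
        ← NNReal.coe_le_coe]
      push_cast
      rw [div_le_div_iff₀ hdR hcR]
      nlinarith
  · lift x to ℝ≥0 using hx
    rw [mob_coe ⟨h1,h2,h3⟩, nat_div_coe hd0, ENNReal.coe_le_coe, ← NNReal.coe_le_coe]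
    push_cast
    have hx0 : (0:ℝ) ≤ x := x.coe_nonneg
    rw [div_le_div_iff₀ hdR (by positivity)]
    nlinarith

lemma mob_upper {P : Mt} (hP : Good P) (x : ℝ≥0∞) :
    mob P x ≤ (P.1 : ℝ≥0∞) / P.2.2.1 := by
  obtain ⟨a,b,c,d⟩ := P
  obtain ⟨h1, h2, h3⟩ := hP
  have hd0 : d ≠ 0 := by omega
  have hdR : (0:ℝ) < d := by exact_mod_cast Nat.pos_of_ne_zero hd0
  have h3R : (b:ℝ) * c ≤ a * d := by exact_mod_cast h3.le
  rcases eq_or_ne x ⊤ with rfl | hx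
  · rw [mob_top]
  · rcases Nat.eq_zero_or_pos c with rfl | hc
    · show _ ≤ (a:ℝ≥0∞)/((0:ℕ):ℝ≥0∞)
      rw [show ((0:ℕ):ℝ≥0∞) = 0 by norm_cast,
        ENNReal.div_zero (show (a:ℝ≥0∞) ≠ 0 by exact_mod_cast Nat.one_le_iff_ne_zero.mp h1)]
      exact le_top
    · have hcR : (0:ℝ) < c := by exact_mod_cast hc
      lift x to ℝ≥0 using hx
      rw [mob_coe ⟨h1,h2,h3⟩, nat_div_coe (show c ≠ 0 by omega), ENNReal.coe_le_coe,
        ← NNReal.coe_le_coe]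
      push_cast
      have hx0 : (0:ℝ) ≤ x := x.coe_nonneg
      rw [div_le_div_iff₀ (by positivity) hcR]
      nlinarith

lemma inv_one_add_lower {b d : ℕ} (hd : d ≠ 0) (x : ℝ≥0∞) (hx : (b:ℝ≥0∞)/d ≤ x) :
    (1 + x)⁻¹ ≤ (d:ℝ≥0∞)/(b+d) := by
  have hdd : (d:ℝ≥0∞) ≠ 0 := by exact_mod_cast hd
  have hdt : (d:ℝ≥0∞) ≠ ⊤ := by simp
  have e1 : (1:ℝ≥0∞) + (b:ℝ≥0∞)/d = ((b+d : ℕ):ℝ≥0∞)/d := by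
    rw [← ENNReal.div_self hdd hdt, ENNReal.div_add_div_same]
    push_cast; rw [add_comm]
  calc (1+x)⁻¹ ≤ (1 + (b:ℝ≥0∞)/d)⁻¹ := ENNReal.inv_le_inv' (by gcongr)
    _ = (d:ℝ≥0∞)/(b+d) := by
        rw [e1, ENNReal.inv_div (Or.inl hdt) (Or.inl hdd)]
        push_cast; ring_nf

lemma inv_one_add_upper {a c : ℕ} (ha : a ≠ 0) (y : ℝ≥0∞) (hy : y ≤ (a:ℝ≥0∞)/c) :
    (c:ℝ≥0∞)/(a+c) ≤ (1 + y)⁻¹ := by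
  rcases Nat.eq_zero_or_pos c with rfl | hc
  · simp
  · have hcc : (c:ℝ≥0∞) ≠ 0 := by exact_mod_cast (by omega : c ≠ 0)
    have hct : (c:ℝ≥0∞) ≠ ⊤ := by simp
    have e1 : (1:ℝ≥0∞) + (a:ℝ≥0∞)/c = ((a+c : ℕ):ℝ≥0∞)/c := by
      rw [← ENNReal.div_self hcc hct, ENNReal.div_add_div_same]
      push_cast; rw [add_comm]
    calc (c:ℝ≥0∞)/(a+c) = (1 + (a:ℝ≥0∞)/c)⁻¹ := by
          rw [e1, ENNReal.inv_div (Or.inl hct) (Or.inl hcc)]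
          push_cast; ring_nf
      _ ≤ (1+y)⁻¹ := ENNReal.inv_le_inv' (by gcongr)

lemma det_gap {a b c d : ℕ} (ha : 1 ≤ a) (hd : 1 ≤ d) (hdet : a * d = b * c + 1) :
    (d:ℝ≥0∞)/(b+d) ≤ (c:ℝ≥0∞)/(a+c) + (((a+c)*(b+d) : ℕ) : ℝ≥0∞)⁻¹ := by
  have hp : a + c ≠ 0 := by omega
  have hq : b + d ≠ 0 := by omega
  have hpq : (a+c)*(b+d) ≠ 0 := by positivity
  have E1 : (d:ℝ≥0∞)/((b:ℝ≥0∞)+(d:ℝ≥0∞)) = ENNReal.ofNNReal ((d:ℝ≥0)/((b:ℝ≥0)+d)) := by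
    rw [ENNReal.coe_div (by intro h; exact hq (by exact_mod_cast (by push_cast at h ⊢; exact h : ((b+d:ℕ):ℝ≥0) = 0)))]
    norm_cast
  have E2 : (c:ℝ≥0∞)/((a:ℝ≥0∞)+(c:ℝ≥0∞)) = ENNReal.ofNNReal ((c:ℝ≥0)/((a:ℝ≥0)+c)) := by
    rw [ENNReal.coe_div (by intro h; exact hp (by exact_mod_cast (by push_cast at h ⊢; exact h : ((a+c:ℕ):ℝ≥0) = 0)))]
    norm_cast
  have E3 : (((a+c)*(b+d) : ℕ) : ℝ≥0∞)⁻¹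
      = ENNReal.ofNNReal ((((a+c)*(b+d) : ℕ) : ℝ≥0)⁻¹) := by
    rw [← ENNReal.coe_natCast ((a+c)*(b+d))]
    exact (ENNReal.coe_inv (Nat.cast_ne_zero.mpr hpq)).symm
  rw [E1, E2, E3, ← ENNReal.coe_add, ENNReal.coe_le_coe, ← NNReal.coe_le_coe]
  push_cast
  have hpR : (0:ℝ) < (a:ℝ) + c := by
    have : (0:ℝ) < (a:ℝ) := by exact_mod_cast ha
    positivity
  have hqR : (0:ℝ) < (b:ℝ) + d := by
    have : (0:ℝ) < (d:ℝ) := by exact_mod_cast hd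
    positivity
  have hdet2 : (a:ℝ) * d = b * c + 1 := by exact_mod_cast hdet
  rw [inv_eq_one_div, div_add_div _ _ (by positivity) (by positivity),
    div_le_div_iff₀ hqR (by positivity)]
  apply le_of_eq
  linear_combination ((a:ℝ)+c)*((b:ℝ)+d)*hdet2

def Bound (P : Mt) (x : ℝ≥0∞) : Prop :=
  (P.2.1:ℝ≥0∞)/P.2.2.2 ≤ x ∧ x ≤ (P.1:ℝ≥0∞)/P.2.2.1

lemma sandwich_le (x y : ℝ≥0∞)
    (H : ∀ n : ℕ, ∃ P : Mt, Good P ∧ P.1 * P.2.2.2 = P.2.1 * P.2.2.1 + 1 ∧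
      n ≤ (P.1 + P.2.2.1) * (P.2.1 + P.2.2.2) ∧ Bound P x ∧ Bound P y) :
    (1+x)⁻¹ ≤ (1+y)⁻¹ := by
  apply ENNReal.le_of_forall_pos_le_add
  intro ε hε _
  obtain ⟨n, hn⟩ := exists_nat_gt (ε⁻¹ : ℝ≥0)
  have hn0 : n ≠ 0 := by
    intro h; subst h; exact absurd hn (by simp)
  have hne : ((n:ℝ≥0∞))⁻¹ ≤ (ε : ℝ≥0∞) := by
    rw [← ENNReal.coe_natCast n, ← ENNReal.coe_inv (Nat.cast_ne_zero.mpr hn0),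
      ENNReal.coe_le_coe]
    have := inv_anti₀ (inv_pos.mpr hε) hn.le
    rwa [inv_inv] at this
  obtain ⟨P, hG, hdet, hsum, hbx, hby⟩ := H n
  obtain ⟨a,b,c,d⟩ := P
  obtain ⟨h1, h2, h3⟩ := hG
  have step1 : (1+x)⁻¹ ≤ (d:ℝ≥0∞)/(b+d) := inv_one_add_lower (by omega) x hbx.1
  have step2 : (c:ℝ≥0∞)/(a+c) ≤ (1+y)⁻¹ := inv_one_add_upper (by omega) y hby.2
  have step3 := det_gap h1 h2 hdet
  have step4 : (((a+c)*(b+d) : ℕ) : ℝ≥0∞)⁻¹ ≤ (n:ℝ≥0∞)⁻¹ :=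
    ENNReal.inv_le_inv' (Nat.cast_le.mpr hsum)
  calc (1+x)⁻¹ ≤ (d:ℝ≥0∞)/(b+d) := step1
    _ ≤ (c:ℝ≥0∞)/(a+c) + (((a+c)*(b+d) : ℕ) : ℝ≥0∞)⁻¹ := step3
    _ ≤ (1+y)⁻¹ + (ε : ℝ≥0∞) := add_le_add step2 (step4.trans hne)

lemma sandwich (x y : ℝ≥0∞)
    (H : ∀ n : ℕ, ∃ P : Mt, Good P ∧ P.1 * P.2.2.2 = P.2.1 * P.2.2.1 + 1 ∧
      n ≤ (P.1 + P.2.2.1) * (P.2.1 + P.2.2.2) ∧ Bound P x ∧ Bound P y) :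
    x = y := by
  have h1 := sandwich_le x y H
  have h2 := sandwich_le y x (by
    intro n; obtain ⟨P, hG, hdet, hsum, hbx, hby⟩ := H n
    exact ⟨P, hG, hdet, hsum, hby, hbx⟩)
  have h3 : (1+x)⁻¹ = (1+y)⁻¹ := le_antisymm h1 h2
  have h4 : (1:ℝ≥0∞)+x = 1+y := by rwa [inv_inj] at h3
  exact (ENNReal.add_right_inj ENNReal.one_ne_top).mp h4

lemma mob_id (x : ℝ≥0∞) : mob (1,0,0,1) x = x := by
  rcases eq_or_ne x ⊤ with rfl | hx
  · simp [mob]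
  · simp only [mob, hx, if_false]
    push_cast
    simp

def det1 (P : Mt) : Prop := P.1 * P.2.2.2 = P.2.1 * P.2.2.1 + 1

lemma det1_mul {P Q : Mt} (hP : det1 P) (hQ : det1 Q) : det1 (mmul P Q) := by
  obtain ⟨a,b,c,d⟩ := P; obtain ⟨a',b',c',d'⟩ := Q
  simp only [det1, mmul] at *
  zify at hP hQ ⊢
  linear_combination ((a':ℤ)*d' - b'*c') * hP + hQ

def sigma' (P : Mt) : ℕ := (P.1 + P.2.2.1) * (P.2.1 + P.2.2.2)

lemma sigma_step {p q a' b' c' d' : ℕ} (hp : 1 ≤ p) (hq : 1 ≤ q) (hpq : 2 ≤ p*q)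
    (h1 : 1 ≤ a') (h2 : 1 ≤ d') :
    (a'+c')*(b'+d') + 1 ≤ (p*a'+q*c')*(p*b'+q*d') := by
  have h5 : 1 ≤ a'*d' := by nlinarith
  have k1 : a'*b' ≤ (p*p)*(a'*b') := Nat.le_mul_of_pos_left _ (by positivity)
  have k2 : (a'*d') + 1 ≤ (p*q)*(a'*d') := by
    have := Nat.mul_le_mul hpq (le_refl (a'*d'))
    omega
  have k3 : b'*c' ≤ (p*q)*(b'*c') := Nat.le_mul_of_pos_left _ (by positivity)
  have k4 : c'*d' ≤ (q*q)*(c'*d') := Nat.le_mul_of_pos_left _ (by positivity)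
  calc (a'+c')*(b'+d') + 1 = a'*b' + (a'*d' + 1) + b'*c' + c'*d' := by ring
    _ ≤ (p*p)*(a'*b') + (p*q)*(a'*d') + (p*q)*(b'*c') + (q*q)*(c'*d') :=
        add_le_add (add_le_add (add_le_add k1 k2) k3) k4
    _ = (p*a'+q*c')*(p*b'+q*d') := by ring

lemma sigma_mmul (P Q : Mt) :
    sigma' (mmul P Q) = ((P.1+P.2.2.1)*Q.1 + (P.2.1+P.2.2.2)*Q.2.2.1) *
      ((P.1+P.2.2.1)*Q.2.1 + (P.2.1+P.2.2.2)*Q.2.2.2) := by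
  obtain ⟨a,b,c,d⟩ := P; obtain ⟨a',b',c',d'⟩ := Q
  simp only [sigma', mmul]
  ring

-- the dynamical system
open Stream' in
def Sys (F G : Stream' Bool → ℝ≥0∞) : Prop :=
  (∀ η, F (cons false (cons false η)) = mob (1,0,1,1) (F η)) ∧
  (∀ η, F (cons false (cons true η)) = mob (2,1,1,1) (G η)) ∧
  (∀ η, F (cons true η) = mob (1,2,0,1) (F η)) ∧
  (∀ η, G (cons false η) = mob (1,0,2,1) (G η)) ∧
  (∀ η, G (cons true (cons false η)) = mob (1,1,1,2) (F η)) ∧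
  (∀ η, G (cons true (cons true η)) = mob (1,1,0,1) (G η))

def step : Bool × Stream' Bool → Mt × (Bool × Stream' Bool) := fun s =>
  match s.1, s.2.head, s.2.tail.head with
  | true, false, false => ((1,0,1,1), (true, s.2.tail.tail))
  | true, false, true  => ((2,1,1,1), (false, s.2.tail.tail))
  | true, true, _      => ((1,2,0,1), (true, s.2.tail))
  | false, false, _    => ((1,0,2,1), (false, s.2.tail))
  | false, true, false => ((1,1,1,2), (true, s.2.tail.tail))
  | false, true, true  => ((1,1,0,1), (false, s.2.tail.tail))

def run : ℕ → Bool × Stream' Bool → Mt × (Bool × Stream' Bool)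
  | 0, s => ((1,0,0,1), s)
  | n+1, s => ((mmul (step s).1 (run n (step s).2).1), (run n (step s).2).2)

def val (F G : Stream' Bool → ℝ≥0∞) : Bool × Stream' Bool → ℝ≥0∞ :=
  fun s => if s.1 then F s.2 else G s.2

lemma step_spec (s : Bool × Stream' Bool) :
    (Good (step s).1 ∧ det1 (step s).1) ∧
      2 ≤ ((step s).1.1 + (step s).1.2.2.1) * ((step s).1.2.1 + (step s).1.2.2.2) := by
  obtain ⟨mo, η⟩ := s
  rcases mo <;> rcases h0 : η.head <;> rcases h1 : η.tail.head <;>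
    simp only [step, h0, h1] <;> exact ⟨⟨by norm_num [Good], by norm_num [det1]⟩, by norm_num⟩

lemma run_spec (n : ℕ) (s : Bool × Stream' Bool) :
    (Good (run n s).1 ∧ det1 (run n s).1) ∧ n + 1 ≤ sigma' (run n s).1 := by
  induction n generalizing s with
  | zero =>
    simp only [run]
    exact ⟨⟨by norm_num [Good], by norm_num [det1]⟩, by norm_num [sigma']⟩
  | succ n ih =>
    obtain ⟨⟨hg, hd⟩, hs⟩ := ih (step s).2
    obtain ⟨⟨hg', hd'⟩, hpq⟩ := step_spec s
    refine ⟨⟨Good.mul hg' hg, det1_mul hd' hd⟩, ?_⟩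
    show n + 2 ≤ sigma' (mmul (step s).1 (run n (step s).2).1)
    rw [sigma_mmul]
    obtain ⟨hg1, hg2, _⟩ := hg
    calc n + 2 ≤ sigma' (run n (step s).2).1 + 1 := by omega
      _ ≤ _ := by
          have := sigma_step (a' := (run n (step s).2).1.1) (b' := (run n (step s).2).1.2.1)
            (c' := (run n (step s).2).1.2.2.1) (d' := (run n (step s).2).1.2.2.2)
            (p := (step s).1.1 + (step s).1.2.2.1) (q := (step s).1.2.1 + (step s).1.2.2.2)
            (by nlinarith) (by nlinarith) hpq hg1 hg2
          simpa [sigma'] using this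

lemma run_val {F G : Stream' Bool → ℝ≥0∞} (hS : Sys F G) (n : ℕ) (s : Bool × Stream' Bool) :
    val F G s = mob (run n s).1 (val F G (run n s).2) := by
  obtain ⟨e1, e2, e3, e4, e5, e6⟩ := hS
  induction n generalizing s with
  | zero => exact (mob_id _).symm
  | succ n ih =>
    have one_step : val F G s = mob (step s).1 (val F G (step s).2) := by
      obtain ⟨mo, η⟩ := s
      have heta : η = Stream'.cons η.head (Stream'.cons η.tail.head η.tail.tail) := by
        rw [Stream'.eta, Stream'.eta]
      rcases mo <;> rcases h0 : η.head <;> rcases h1 : η.tail.head <;>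
        simp only [step, h0, h1] <;> rw [h0, h1] at heta <;>
        simp only [val, if_true, if_false] <;> rw [heta]
      · exact e4 _
      · exact e4 _
      · exact e5 _
      · exact e6 _
      · exact e1 _
      · exact e2 _
      · exact e3 _
      · exact e3 _
    rw [one_step, ih (step s).2]
    show _ = mob (mmul (step s).1 (run n (step s).2).1) _
    rw [mob_comp (step_spec s).1.1 (run_spec n (step s).2).1.1]
    rfl

lemma sys_unique {F G F' G' : Stream' Bool → ℝ≥0∞} (hS : Sys F G) (hS' : Sys F' G')
    (s : Bool × Stream' Bool) : val F G s = val F' G' s := by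
  apply sandwich
  intro n
  obtain ⟨⟨hg, hd⟩, hs⟩ := run_spec n s
  refine ⟨(run n s).1, hg, hd, le_trans (Nat.le_succ n) (by simpa [sigma'] using hs), ?_, ?_⟩
  · rw [run_val hS n s]
    exact ⟨mob_lower hg _, mob_upper hg _⟩
  · rw [run_val hS' n s]
    exact ⟨mob_lower hg _, mob_upper hg _⟩

lemma inv_one_add_inv (x : ℝ≥0∞) : (1 + x⁻¹)⁻¹ = mob (1,0,1,1) x := by
  rcases eq_or_ne x ⊤ with rfl | hx
  · simp [mob]
  · rcases eq_or_ne x 0 with rfl | hx0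
    · simp [mob]
    · lift x to ℝ≥0 using hx
      have hx0' : x ≠ 0 := by exact_mod_cast hx0
      rw [mob_coe (by norm_num [Good])]
      rw [← ENNReal.coe_inv hx0', ← ENNReal.coe_one, ← ENNReal.coe_add,
        ← ENNReal.coe_inv (by positivity)]
      rw [ENNReal.coe_inj]
      show (1 + x⁻¹)⁻¹ = ((1:ℕ) * x + (0:ℕ)) / ((1:ℕ) * x + (1:ℕ))
      push_cast
      field_simp
      simp

lemma one_add_eq (x : ℝ≥0∞) : 1 + x = mob (1,1,0,1) x := by
  rcases eq_or_ne x ⊤ with rfl | hx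
  · simp [mob]
  · lift x to ℝ≥0 using hx
    rw [mob_coe (by norm_num [Good]), ← ENNReal.coe_one, ← ENNReal.coe_add, ENNReal.coe_inj]
    show 1 + x = ((1:ℕ) * x + (1:ℕ)) / ((0:ℕ) * x + (1:ℕ))
    push_cast
    simp [add_comm]

lemma two_mul_eq (x : ℝ≥0∞) : 2 * x = mob (2,0,0,1) x := by
  rcases eq_or_ne x ⊤ with rfl | hx
  · rw [mob_top]
    show _ = (2:ℕ)/((0:ℕ):ℝ≥0∞)
    rw [ENNReal.mul_top (by norm_num)]
    simp [ENNReal.div_zero]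
  · lift x to ℝ≥0 using hx
    rw [mob_coe (by norm_num [Good]), show ((2:ℝ≥0∞)) = ((2:ℝ≥0):ℝ≥0∞) by norm_cast,
      ← ENNReal.coe_mul, ENNReal.coe_inj]
    show 2 * x = ((2:ℕ) * x + (0:ℕ)) / ((0:ℕ) * x + (1:ℕ))
    push_cast
    simp

lemma half_eq (x : ℝ≥0∞) : x / 2 = mob (1,0,0,2) x := by
  rcases eq_or_ne x ⊤ with rfl | hx
  · rw [mob_top]
    show _ = (1:ℕ)/((0:ℕ):ℝ≥0∞)
    rw [ENNReal.top_div_of_ne_top (by norm_num)]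
    simp [ENNReal.div_zero]
  · lift x to ℝ≥0 using hx
    rw [mob_coe (by norm_num [Good]), show ((2:ℝ≥0∞)) = ((2:ℝ≥0):ℝ≥0∞) by norm_cast,
      ← ENNReal.coe_div (by norm_num), ENNReal.coe_inj]
    show x / 2 = ((1:ℕ) * x + (0:ℕ)) / ((0:ℕ) * x + (2:ℕ))
    push_cast
    simp

lemma frac_form (u : ℝ≥0) (hu : u ≠ 0) :
    ((1 : ℝ≥0∞) + ((u:ℝ≥0∞))⁻¹)⁻¹ = ((u/(u+1) : ℝ≥0) : ℝ≥0∞) := by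
  rw [inv_one_add_inv, mob_coe (by norm_num [Good]), ENNReal.coe_inj]
  push_cast
  ring_nf

open OnePoint

/-- The localization of a map `f` of `2^ℕ` at a finite binary sequence `s`. -/
def loc (s : List Bool) (f : Stream' Bool → Stream' Bool) (ξ : Stream' Bool) : Stream' Bool :=
  if Stream'.take s.length ξ = s then
    Stream'.appendStream' s (f (Stream'.drop s.length ξ))
  else ξ

/-- under the identification Φ, the localized doubling map y_{10}
corresponds to c(t) = 2t/(1+t) on [0,1] extended by the identity. -/
theorem Phi_y10_is_c
    (φ : Stream' Bool → ENNReal)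
    (hφ0 : ∀ ξ, φ (Stream'.cons false ξ) = (1 + (φ ξ)⁻¹)⁻¹)
    (hφ1 : ∀ ξ, φ (Stream'.cons true ξ) = 1 + φ ξ)
    (Φ : Stream' Bool → OnePoint ℝ)
    (hΦ1 : ∀ ξ, Φ (Stream'.cons true ξ) =
      if φ ξ = ⊤ then (∞ : OnePoint ℝ) else ((φ ξ).toReal : OnePoint ℝ))
    (hΦ0 : ∀ ξ, Φ (Stream'.cons false ξ) =
      if φ (Stream'.map not ξ) = ⊤ then (∞ : OnePoint ℝ)
      else ((-(φ (Stream'.map not ξ)).toReal : ℝ) : OnePoint ℝ))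
    (y z : Stream' Bool → Stream' Bool)
    (hy00 : ∀ η, y (Stream'.cons false (Stream'.cons false η)) =
      Stream'.cons false (y η))
    (hy01 : ∀ η, y (Stream'.cons false (Stream'.cons true η)) =
      Stream'.cons true (Stream'.cons false (z η)))
    (hy1 : ∀ η, y (Stream'.cons true η) =
      Stream'.cons true (Stream'.cons true (y η)))
    (hz0 : ∀ η, z (Stream'.cons false η) =
      Stream'.cons false (Stream'.cons false (z η)))
    (hz10 : ∀ η, z (Stream'.cons true (Stream'.cons false η)) =
      Stream'.cons false (Stream'.cons true (y η)))
    (hz11 : ∀ η, z (Stream'.cons true (Stream'.cons true η)) =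
      Stream'.cons true (z η)) :
    ∀ ξ : Stream' Bool,
      (∀ r : ℝ, Φ ξ = (r : OnePoint ℝ) →
        Φ (loc [true, false] y ξ) =
          ((if 0 ≤ r ∧ r ≤ 1 then 2 * r / (1 + r) else r : ℝ) : OnePoint ℝ)) ∧
      (Φ ξ = (∞ : OnePoint ℝ) → Φ (loc [true, false] y ξ) = (∞ : OnePoint ℝ)) := by
  have hM0 : Good (1,0,1,1) := by norm_num [Good]
  have hM1 : Good (1,1,0,1) := by norm_num [Good]
  have hD2 : Good (2,0,0,1) := by norm_num [Good]
  have hH : Good (1,0,0,2) := by norm_num [Good]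
  -- system solution 1 : (φ∘y, φ∘z)
  have hSys1 : Sys (fun η => φ (y η)) (fun η => φ (z η)) := by
    refine ⟨fun η => ?_, fun η => ?_, fun η => ?_, fun η => ?_, fun η => ?_, fun η => ?_⟩
    · show φ (y (Stream'.cons false (Stream'.cons false η))) = mob (1,0,1,1) (φ (y η))
      rw [hy00, hφ0, inv_one_add_inv]
    · show φ (y (Stream'.cons false (Stream'.cons true η))) = mob (2,1,1,1) (φ (z η))
      rw [hy01, hφ1, hφ0, inv_one_add_inv, one_add_eq, mob_comp hM1 hM0]
      norm_num [mmul]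
    · show φ (y (Stream'.cons true η)) = mob (1,2,0,1) (φ (y η))
      rw [hy1, hφ1, hφ1, one_add_eq, one_add_eq, mob_comp hM1 hM1]
      norm_num [mmul]
    · show φ (z (Stream'.cons false η)) = mob (1,0,2,1) (φ (z η))
      rw [hz0, hφ0, hφ0, inv_one_add_inv, inv_one_add_inv, mob_comp hM0 hM0]
      norm_num [mmul]
    · show φ (z (Stream'.cons true (Stream'.cons false η))) = mob (1,1,1,2) (φ (y η))
      rw [hz10, hφ0, hφ1, one_add_eq (φ (y η)), inv_one_add_inv, mob_comp hM0 hM1]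
      norm_num [mmul]
    · show φ (z (Stream'.cons true (Stream'.cons true η))) = mob (1,1,0,1) (φ (z η))
      rw [hz11, hφ1, one_add_eq]
  -- system solution 2 : (2φ, φ/2)
  have hSys2 : Sys (fun η => 2 * φ η) (fun η => φ η / 2) := by
    refine ⟨fun η => ?_, fun η => ?_, fun η => ?_, fun η => ?_, fun η => ?_, fun η => ?_⟩
    · show 2 * φ (Stream'.cons false (Stream'.cons false η)) = mob (1,0,1,1) (2 * φ η)
      rw [hφ0, hφ0, inv_one_add_inv (φ η), inv_one_add_inv, two_mul_eq (φ η),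
        two_mul_eq, mob_comp hM0 hM0, mob_comp hD2 (hM0.mul hM0), mob_comp hM0 hD2]
      norm_num [mmul]
    · show 2 * φ (Stream'.cons false (Stream'.cons true η)) = mob (2,1,1,1) (φ η / 2)
      rw [hφ0, hφ1, one_add_eq (φ η), inv_one_add_inv, half_eq (φ η), two_mul_eq,
        mob_comp hM0 hM1, mob_comp hD2 (hM0.mul hM1),
        mob_comp (show Good (2,1,1,1) by norm_num [Good]) hH]
      norm_num [mmul]
    · show 2 * φ (Stream'.cons true η) = mob (1,2,0,1) (2 * φ η)
      rw [hφ1, one_add_eq (φ η), two_mul_eq (φ η), two_mul_eq, mob_comp hD2 hM1,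
        mob_comp (show Good (1,2,0,1) by norm_num [Good]) hD2]
      norm_num [mmul]
    · show φ (Stream'.cons false η) / 2 = mob (1,0,2,1) (φ η / 2)
      rw [hφ0, inv_one_add_inv (φ η), half_eq (φ η), half_eq, mob_comp hH hM0,
        mob_comp (show Good (1,0,2,1) by norm_num [Good]) hH]
      norm_num [mmul]
    · show φ (Stream'.cons true (Stream'.cons false η)) / 2 = mob (1,1,1,2) (2 * φ η)
      rw [hφ1, hφ0, inv_one_add_inv (φ η), one_add_eq, two_mul_eq (φ η), half_eq,
        mob_comp hM1 hM0, mob_comp hH (hM1.mul hM0),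
        mob_comp (show Good (1,1,1,2) by norm_num [Good]) hD2]
      norm_num [mmul]
    · show φ (Stream'.cons true (Stream'.cons true η)) / 2 = mob (1,1,0,1) (φ η / 2)
      rw [hφ1, hφ1, one_add_eq (φ η), one_add_eq, half_eq (φ η), half_eq,
        mob_comp hM1 hM1, mob_comp hH (hM1.mul hM1), mob_comp hM1 hH]
      norm_num [mmul]
  have key : ∀ η, φ (y η) = 2 * φ η := by
    intro η
    have h := sys_unique hSys1 hSys2 (true, η)
    simpa [val] using h
  -- basic finiteness facts
  have hfin : ∀ η, φ (Stream'.cons false η) ≠ ⊤ := by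
    intro η
    rw [hφ0]
    exact ENNReal.inv_ne_top.mpr (by simp)
  have hle1 : ∀ η, φ (Stream'.cons false η) ≤ 1 := by
    intro η
    rw [hφ0]
    exact ENNReal.inv_le_one.mpr le_self_add
  intro ξ
  have htake : Stream'.take 2 ξ = [ξ.head, ξ.tail.head] := rfl
  rcases hb0 : ξ.head with _ | _
  · -- ξ starts with 0 : loc is the identity, Φ ξ ≤ 0
    have hξ : ξ = Stream'.cons false ξ.tail := by
      conv_lhs => rw [← Stream'.eta ξ, hb0]
    have hloc : loc [true, false] y ξ = ξ := by
      unfold loc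
      rw [if_neg]
      intro h
      rw [show ([true, false] : List Bool).length = 2 from rfl, htake] at h
      simp [hb0] at h
    rw [hloc]
    constructor
    · intro r hr
      rw [hξ, hΦ0] at hr ⊢
      split_ifs at hr with h
      · exact absurd hr (OnePoint.infty_ne_coe r)
      · rw [if_neg h]
        have hr' : -(φ (Stream'.map not ξ.tail)).toReal = r := OnePoint.coe_eq_coe.mp hr
        have h0r : r ≤ 0 := by rw [← hr']; simp
        rw [hr']
        congr 1
        split_ifs with hcond
        · have : r = 0 := le_antisymm h0r hcond.1
          rw [this]; norm_num
        · rfl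
    · intro hr; exact hr
  · rcases hb1 : ξ.tail.head with _ | _
    · -- ξ = 10…, the main case
      set η := ξ.tail.tail with hη
      have hξ : ξ = Stream'.cons true (Stream'.cons false η) := by
        conv_lhs => rw [← Stream'.eta ξ, hb0, ← Stream'.eta ξ.tail, hb1]
      have hloc : loc [true, false] y ξ = Stream'.cons true (Stream'.cons false (y η)) := by
        unfold loc
        rw [if_pos (by rw [show ([true, false] : List Bool).length = 2 from rfl, htake, hb0, hb1])]
        show Stream'.appendStream' _ (y (Stream'.drop 2 ξ)) = _
        rfl
      have hfin1 : φ (Stream'.cons false η) ≠ ⊤ := hfin η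
      have hfin2 : φ (Stream'.cons false (y η)) ≠ ⊤ := hfin (y η)
      constructor
      · intro r hr
        rw [hξ, hΦ1, if_neg hfin1] at hr
        have hr' : (φ (Stream'.cons false η)).toReal = r := OnePoint.coe_eq_coe.mp hr
        have h0r : 0 ≤ r := by rw [← hr']; simp
        have h1r : r ≤ 1 := by
          rw [← hr']
          have := ENNReal.toReal_mono (b := 1) (by simp) (hle1 η)
          simpa using this
        rw [hloc, hΦ1, if_neg hfin2, if_pos ⟨h0r, h1r⟩, OnePoint.coe_eq_coe]
        -- now a real computation
        rw [← hr', hφ0, hφ0, key]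
        rcases eq_or_ne (φ η) ⊤ with htop | hne
        · rw [htop]
          rw [ENNReal.mul_top (by norm_num)]
          simp
          norm_num
        · rcases eq_or_ne (φ η) 0 with h0 | h0
          · rw [h0]
            simp
          · lift (φ η) to ℝ≥0 using hne with u hu
            have hu0 : u ≠ 0 := by exact_mod_cast h0
            have h2u : (2 : ℝ≥0∞) * u = ((2*u : ℝ≥0) : ℝ≥0∞) := by push_cast; rfl
            rw [h2u, frac_form u hu0, frac_form (2*u) (by positivity)]
            rw [ENNReal.coe_toReal, ENNReal.coe_toReal]
            push_cast
            have hup : (0:ℝ) < u := by positivity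
            rw [div_eq_div_iff (by positivity) (by positivity)]
            ring_nf
            field_simp
            ring
      · intro hr
        rw [hξ, hΦ1, if_neg hfin1] at hr
        exact absurd hr (OnePoint.coe_ne_infty _)
    · -- ξ = 11… : loc is the identity, Φ ξ ≥ 1 (or ∞)
      set η := ξ.tail.tail with hη
      have hξ : ξ = Stream'.cons true (Stream'.cons true η) := by
        conv_lhs => rw [← Stream'.eta ξ, hb0, ← Stream'.eta ξ.tail, hb1]
      have hloc : loc [true, false] y ξ = ξ := by
        unfold loc
        rw [if_neg]
        intro h
        rw [show ([true, false] : List Bool).length = 2 from rfl, htake] at h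
        simp [hb0, hb1] at h
      rw [hloc]
      constructor
      · intro r hr
        rw [hξ, hΦ1] at hr ⊢
        split_ifs at hr with h
        · exact absurd hr (OnePoint.infty_ne_coe r)
        · rw [if_neg h]
          have hr' : (φ (Stream'.cons true η)).toReal = r := OnePoint.coe_eq_coe.mp hr
          have h1r : 1 ≤ r := by
            rw [← hr']
            have := ENNReal.toReal_mono (a := 1) (b := φ (Stream'.cons true η)) h
              (by rw [hφ1]; exact le_self_add)
            simpa using this
          rw [hr']
          congr 1
          split_ifs with hcond
          · have : r = 1 := le_antisymm hcond.2 h1r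
            rw [this]; norm_num
          · rfl
      · intro hr; exact hr
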